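/- The double sum over all direction pairs of the squared kernel equals 1: Σ_{α,β=1}^d Σ_{z ∈ ℤ^d} Γ_{βα}(z)² = 1. -/

import Mathlib

open MeasureTheory Real

/-- The lattice Green's function kernel `Γ_{αβ}(z)` on `ℤ^d`. -/
noncomputable def latticeGamma (d : ℕ) (α β : Fin d) (z : Fin d → ℤ) : ℝ :=
  -∫ l : Fin d → ℝ in Set.univ.pi fun _ : Fin d => Set.Icc (0 : ℝ) 1,
    (Real.sin (π * l α) * Real.sin (π * l β) *
        Real.cos (2 * π * ((∑ γ, l γ * (z γ : ℝ)) - l α / 2 + l β / 2))) /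
      ∑ γ, Real.sin (π * l γ) ^ 2

section LatticeGammaAux

open AddCircle ContinuousMap Submodule Set Algebra
open scoped ComplexConjugate ENNReal

noncomputable section
abbrev Td (d : ℕ) := Fin d → AddCircle (1:ℝ)

instance : IsProbabilityMeasure (volume : Measure (AddCircle (1:ℝ))) := by
  have : (volume : Measure (AddCircle (1:ℝ))) = haarAddCircle := by
    rw [volume_eq_smul_haarAddCircle]; simp
  rw [this]; infer_instance

instance (d : ℕ) : IsProbabilityMeasure (volume : Measure (Td d)) := by
  rw [volume_pi]; infer_instance

variable {d : ℕ}

def mfourier (z : Fin d → ℤ) : C(Td d, ℂ) :=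
  ∏ γ, (fourier (z γ)).comp ⟨fun x => x γ, continuous_apply γ⟩

theorem mfourier_apply (z : Fin d → ℤ) (x : Td d) :
    mfourier z x = ∏ γ, fourier (z γ) (x γ) := by simp [mfourier]

theorem mfourier_zero (x : Td d) : mfourier 0 x = 1 := by
  simp [mfourier_apply, fourier_zero]

theorem mfourier_add (z w : Fin d → ℤ) (x : Td d) :
    mfourier (z + w) x = mfourier z x * mfourier w x := by
  simp only [mfourier_apply, Pi.add_apply]
  rw [← Finset.prod_mul_distrib]
  exact Finset.prod_congr rfl fun γ _ => fourier_add

theorem mfourier_neg (z : Fin d → ℤ) (x : Td d) :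
    mfourier (-z) x = conj (mfourier z x) := by
  simp only [mfourier_apply, Pi.neg_apply, map_prod]
  exact Finset.prod_congr rfl fun γ _ => fourier_neg

def mfourierSubalgebra (d : ℕ) : StarSubalgebra ℂ C(Td d, ℂ) where
  toSubalgebra := Algebra.adjoin ℂ (range (mfourier (d := d)))
  star_mem' := by
    show Algebra.adjoin ℂ (range (mfourier (d := d))) ≤
      star (Algebra.adjoin ℂ (range (mfourier (d := d))))
    refine adjoin_le ?_
    rintro - ⟨z, rfl⟩
    exact subset_adjoin ⟨-z, ContinuousMap.ext fun x => mfourier_neg z x⟩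

theorem mfourierSubalgebra_coe (d : ℕ) :
    Subalgebra.toSubmodule (mfourierSubalgebra d).toSubalgebra
      = span ℂ (range (mfourier (d := d))) := by
  apply adjoin_eq_span_of_subset
  refine Subset.trans ?_ Submodule.subset_span
  intro x hx
  refine Submonoid.closure_induction (fun _ => id) ⟨0, ?_⟩ ?_ hx
  · ext1 y; exact mfourier_zero y
  · rintro - - - - ⟨z, rfl⟩ ⟨w, rfl⟩
    exact ⟨z + w, ContinuousMap.ext fun y => mfourier_add z w y⟩

theorem mfourierSubalgebra_separatesPoints (d : ℕ) :
    (mfourierSubalgebra d).SeparatesPoints := by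
  intro x y hxy
  obtain ⟨γ, hγ⟩ : ∃ γ, x γ ≠ y γ := by
    by_contra h
    push_neg at h
    exact hxy (funext h)
  refine ⟨_, ⟨mfourier (Pi.single γ 1), subset_adjoin ⟨Pi.single γ 1, rfl⟩, rfl⟩, ?_⟩
  dsimp only
  have key : ∀ u : Td d, mfourier (Pi.single γ 1) u = fourier 1 (u γ) := by
    intro u
    rw [mfourier_apply]
    rw [Finset.prod_eq_single γ]
    · simp
    · intro b _ hb; simp [Pi.single_eq_of_ne hb, fourier_zero]
    · simp
  rw [key, key, fourier_one, fourier_one]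
  contrapose! hγ
  rw [Circle.coe_inj] at hγ
  exact injective_toCircle one_ne_zero hγ

theorem mfourierSubalgebra_closure_eq_top (d : ℕ) :
    (mfourierSubalgebra d).topologicalClosure = ⊤ :=
  ContinuousMap.starSubalgebra_topologicalClosure_eq_top_of_separatesPoints _
    (mfourierSubalgebra_separatesPoints d)

theorem span_mfourier_closure_eq_top (d : ℕ) :
    (span ℂ (range (mfourier (d := d)))).topologicalClosure = ⊤ := by
  rw [← mfourierSubalgebra_coe]
  exact congr_arg (Subalgebra.toSubmodule <| StarSubalgebra.toSubalgebra ·)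
    (mfourierSubalgebra_closure_eq_top d)

abbrev mfourierLp (d : ℕ) (z : Fin d → ℤ) : Lp ℂ 2 (volume : Measure (Td d)) :=
  toLp (E := ℂ) 2 volume ℂ (mfourier z)

theorem span_mfourierLp_closure_eq_top (d : ℕ) :
    (span ℂ (range (mfourierLp d))).topologicalClosure = ⊤ := by
  convert (ContinuousMap.toLp_denseRange ℂ (volume : Measure (Td d)) ℂ
      (by norm_num : (2:ℝ≥0∞) ≠ ∞)).topologicalClosure_map_submodule
      (span_mfourier_closure_eq_top d)
  · rfl
  erw [map_span, range_comp]
  simp only [ContinuousLinearMap.coe_coe]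

theorem fourier1d_orthonormal_integral (i j : ℤ) :
    ∫ t : AddCircle (1:ℝ), conj (fourier i t) * fourier j t
      = if i = j then (1:ℂ) else 0 := by
  have h := orthonormal_iff_ite.mp (orthonormal_fourier (T := 1)) i j
  rw [ContinuousMap.inner_toLp (haarAddCircle) (fourier i) (fourier j)] at h
  have hv : (volume : Measure (AddCircle (1:ℝ))) = haarAddCircle := by
    rw [volume_eq_smul_haarAddCircle]; simp
  rw [hv]
  simpa [mul_comm] using h

theorem orthonormal_mfourier (d : ℕ) : Orthonormal ℂ (mfourierLp d) := by
  rw [orthonormal_iff_ite]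
  intro z w
  rw [ContinuousMap.inner_toLp (volume : Measure (Td d)) (mfourier z) (mfourier w)]
  have key : ∀ x : Td d, conj (mfourier z x) * mfourier w x
      = ∏ γ, (conj (fourier (z γ) (x γ)) * fourier (w γ) (x γ)) := by
    intro x
    simp only [mfourier_apply, map_prod, Finset.prod_mul_distrib]
  simp_rw [mul_comm (mfourier w _)]
  simp_rw [key]
  rw [volume_pi, MeasureTheory.integral_fintype_prod_eq_prod
    (f := fun γ t => conj (fourier (z γ) t) * fourier (w γ) t)]
  simp_rw [fourier1d_orthonormal_integral]
  by_cases h : z = w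
  · simp [h]
  · rw [if_neg h]
    obtain ⟨γ, hγ⟩ : ∃ γ, z γ ≠ w γ := by
      by_contra hc; push_neg at hc; exact h (funext hc)
    exact Finset.prod_eq_zero (Finset.mem_univ γ) (by rw [if_neg hγ])

def mfourierBasis (d : ℕ) : HilbertBasis (Fin d → ℤ) ℂ (Lp ℂ 2 (volume : Measure (Td d))) :=
  HilbertBasis.mk (orthonormal_mfourier d) (span_mfourierLp_closure_eq_top d).ge

theorem coe_mfourierBasis (d : ℕ) : ⇑(mfourierBasis d) = mfourierLp d :=
  HilbertBasis.coe_mk _ _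

/-- the Fourier coefficient -/
def mcoeff (f : Td d → ℂ) (z : Fin d → ℤ) : ℂ :=
  ∫ x : Td d, conj (mfourier z x) * f x

theorem mfourierBasis_repr (f : Lp ℂ 2 (volume : Measure (Td d))) (z : Fin d → ℤ) :
    (mfourierBasis d).repr f z = mcoeff f z := by
  trans ∫ x : Td d, conj ((mfourierLp d z : Td d → ℂ) x) * f x
  · rw [(mfourierBasis d).repr_apply_apply f z, MeasureTheory.L2.inner_def, coe_mfourierBasis]
    simp only [RCLike.inner_apply]
    exact integral_congr_ae (Filter.Eventually.of_forall fun x => mul_comm _ _)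
  · apply integral_congr_ae
    filter_upwards [coeFn_toLp (p := 2) volume (E := ℂ) (𝕜 := ℂ) (mfourier z)] with x hx
    rw [hx]

theorem tsum_sq_mcoeff (f : Lp ℂ 2 (volume : Measure (Td d))) :
    ∑' z : Fin d → ℤ, ‖mcoeff (⇑f) z‖ ^ 2 = ∫ x : Td d, ‖f x‖ ^ 2 := by
  simp_rw [← mfourierBasis_repr]
  have H₁ : ‖(mfourierBasis d).repr f‖ ^ 2 = ∑' z, ‖(mfourierBasis d).repr f z‖ ^ 2 := by
    apply_mod_cast lp.norm_rpow_eq_tsum ?_ ((mfourierBasis d).repr f)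
    norm_num
  have H₂ : ‖(mfourierBasis d).repr f‖ ^ 2 = ‖f‖ ^ 2 := by simp
  have H₃ := congr_arg RCLike.re (@L2.inner_def (Td d) ℂ ℂ _ _ _ _ _ f f)
  rw [← integral_re] at H₃
  · simp only [inner_self_eq_norm_sq] at H₃
    rw [← H₁, H₂, H₃]
  · exact L2.integrable_inner f f

def Smf (t : AddCircle (1:ℝ)) : ℂ := (1 - fourier (-1) t) * (-Complex.I/2)
def Spf (t : AddCircle (1:ℝ)) : ℂ := (1 - fourier 1 t) * (Complex.I/2)

theorem Spf_eq_conj (t : AddCircle (1:ℝ)) : Spf t = conj (Smf t) := by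
  simp only [Smf, Spf, map_mul, map_sub, map_one, map_div₀, map_neg, Complex.conj_I,
    Complex.conj_ofNat]
  rw [← fourier_neg]
  ring_nf

theorem Smf_coe (l : ℝ) : Smf (l : AddCircle (1:ℝ))
    = (Real.sin (π * l) : ℂ) * Complex.exp (-(π * l : ℝ) * Complex.I) := by
  rw [Smf, fourier_coe_apply]
  rw [Complex.ofReal_sin, Complex.sin]
  have h1 : Complex.exp (-(π * l:ℝ) * Complex.I) * Complex.exp (-(π * l:ℝ) * Complex.I)
      = Complex.exp (2 * π * Complex.I * (-1) * l / 1) := by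
    rw [← Complex.exp_add]; congr 1; push_cast; ring
  have h2 : Complex.exp ((π * l:ℝ) * Complex.I) * Complex.exp (-(π * l:ℝ) * Complex.I) = 1 := by
    rw [← Complex.exp_add, show ((π * l:ℝ) * Complex.I) + (-(π * l:ℝ) * Complex.I) = 0 by ring,
      Complex.exp_zero]
  have h3 : (↑(π * l) : ℂ) = (π : ℂ) * l := by push_cast; ring
  calc (1 - Complex.exp (2 * ↑π * Complex.I * ↑(-1 : ℤ) * ↑l / ↑(1:ℝ))) * (-Complex.I / 2)
      = (Complex.exp ((π * l:ℝ) * Complex.I) * Complex.exp (-(π * l:ℝ) * Complex.I)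
          - Complex.exp (-(π * l:ℝ) * Complex.I) * Complex.exp (-(π * l:ℝ) * Complex.I))
          * (-Complex.I / 2) := by
        rw [h2, h1]; norm_num
    _ = (Complex.exp (-(↑(π * l):ℂ) * Complex.I) - Complex.exp ((↑(π * l):ℂ) * Complex.I))
          * Complex.I / 2 * Complex.exp (-(π * l:ℝ) * Complex.I) := by
        rw [h3]; push_cast; ring

theorem Spf_coe (l : ℝ) : Spf (l : AddCircle (1:ℝ))
    = (Real.sin (π * l) : ℂ) * Complex.exp ((π * l : ℝ) * Complex.I) := by
  rw [Spf_eq_conj, Smf_coe, map_mul, Complex.conj_ofReal, ← Complex.exp_conj]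
  congr 1
  simp

theorem normSq_Smf_coe (l : ℝ) : Complex.normSq (Smf (l : AddCircle (1:ℝ)))
    = Real.sin (π * l) ^ 2 := by
  rw [Smf_coe, Complex.normSq_mul, Complex.normSq_ofReal]
  have : Complex.normSq (Complex.exp (-(π * l : ℝ) * Complex.I)) = 1 := by
    rw [Complex.normSq_eq_norm_sq, Complex.norm_exp]
    simp
  rw [this, mul_one, sq]

theorem normSq_Spf (t : AddCircle (1:ℝ)) : Complex.normSq (Spf t) = Complex.normSq (Smf t) := by
  rw [Spf_eq_conj, Complex.normSq_conj]

theorem Smf_neg (t : AddCircle (1:ℝ)) : Smf (-t) = -Spf t := by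
  simp only [Smf, Spf]
  have : fourier (-1) (-t) = fourier 1 t := by
    have h2 : fourier 1 (-t) = conj (fourier 1 t) := by
      rw [fourier_apply, show ((1:ℤ) • -t) = -((1:ℤ) • t) by rw [smul_neg], fourier_neg']
    rw [fourier_neg, h2, Complex.conj_conj]
  rw [this]; ring

theorem Spf_neg (t : AddCircle (1:ℝ)) : Spf (-t) = -Smf t := by
  rw [Spf_eq_conj, Smf_neg, map_neg, Spf_eq_conj, Complex.conj_conj]

theorem Smf_eq_zero_iff (t : AddCircle (1:ℝ)) : Smf t = 0 ↔ t = 0 := by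
  constructor
  · intro h
    rw [Smf, mul_eq_zero] at h
    have hI : (-Complex.I/2 : ℂ) ≠ 0 := by simp [Complex.I_ne_zero]
    have h1 : (1 : ℂ) - fourier (-1) t = 0 := h.resolve_right hI
    have h2 : fourier (-1) t = 1 := (sub_eq_zero.mp h1).symm
    have h3 : fourier 1 t = 1 := by
      rw [fourier_neg] at h2
      have := congrArg conj h2
      rwa [Complex.conj_conj, map_one] at this
    rw [fourier_one] at h3
    have h5 : (toCircle (0 : AddCircle (1:ℝ)) : ℂ) = 1 := fourier_zero' (T := 1)
    have h4 : (toCircle t : ℂ) = (toCircle (0 : AddCircle (1:ℝ)) : ℂ) := by rw [h5]; exact h3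
    exact injective_toCircle one_ne_zero (Subtype.coe_inj.mp h4)
  · intro h
    subst h
    have : fourier (-1) (0 : AddCircle (1:ℝ)) = 1 := fourier_eval_zero (-1)
    rw [Smf, this]; ring

theorem continuous_Smf : Continuous Smf :=
  ((continuous_const.sub (map_continuous (fourier (-1)))).mul continuous_const)

theorem continuous_Spf : Continuous Spf :=
  ((continuous_const.sub (map_continuous (fourier 1))).mul continuous_const)

variable {d : ℕ}

def dden (x : Td d) : ℝ := ∑ γ, Complex.normSq (Smf (x γ))

def hFun (α β : Fin d) (x : Td d) : ℂ := Smf (x α) * Spf (x β) / (dden x : ℂ)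

theorem continuous_dden : Continuous (dden (d := d)) := by
  refine continuous_finset_sum _ fun γ _ => ?_
  exact Complex.continuous_normSq.comp (continuous_Smf.comp (continuous_apply γ))

theorem measurable_hFun (α β : Fin d) : Measurable (hFun α β) := by
  refine Measurable.div ?_ ?_
  · exact ((continuous_Smf.comp (continuous_apply α)).mul
      (continuous_Spf.comp (continuous_apply β))).measurable
  · exact (Complex.continuous_ofReal.comp continuous_dden).measurable

theorem dden_nonneg (x : Td d) : 0 ≤ dden x :=
  Finset.sum_nonneg fun γ _ => Complex.normSq_nonneg _

theorem norm_hFun_le (α β : Fin d) (x : Td d) : ‖hFun α β x‖ ≤ 1 := by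
  rw [hFun]
  rcases eq_or_ne (dden x) 0 with h | h
  · simp [h]
  · have hpos : 0 < dden x := lt_of_le_of_ne (dden_nonneg x) (Ne.symm h)
    rw [norm_div, Complex.norm_real, Real.norm_eq_abs, abs_of_pos hpos, div_le_one hpos,
      norm_mul]
    have h1 : ‖Smf (x α)‖ ^ 2 ≤ dden x := by
      rw [Complex.sq_norm]
      exact Finset.single_le_sum (fun γ _ => Complex.normSq_nonneg (Smf (x γ)))
        (Finset.mem_univ α)
    have h2 : ‖Spf (x β)‖ ^ 2 ≤ dden x := by
      rw [Complex.sq_norm, normSq_Spf]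
      exact Finset.single_le_sum (fun γ _ => Complex.normSq_nonneg (Smf (x γ)))
        (Finset.mem_univ β)
    nlinarith [norm_nonneg (Smf (x α)), norm_nonneg (Spf (x β))]

theorem sum_sq_norm_hFun {x : Td d} (h : dden x ≠ 0) :
    ∑ α : Fin d, ∑ β : Fin d, ‖hFun α β x‖ ^ 2 = 1 := by
  have key : ∀ α β : Fin d, ‖hFun α β x‖ ^ 2
      = Complex.normSq (Smf (x α)) * Complex.normSq (Smf (x β)) / (dden x) ^ 2 := by
    intro α β
    rw [hFun, Complex.sq_norm, Complex.normSq_div, Complex.normSq_mul,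
      normSq_Spf, Complex.normSq_ofReal, sq]
  simp_rw [key, ← Finset.sum_div]
  have h2 : ∑ α : Fin d, ∑ β : Fin d, Complex.normSq (Smf (x α)) * Complex.normSq (Smf (x β))
      = dden x * dden x := by
    rw [dden, Finset.sum_mul_sum]
  rw [h2, ← sq]
  exact div_self (pow_ne_zero _ h)

theorem dden_eq_zero_iff (x : Td d) : dden x = 0 ↔ x = 0 := by
  rw [dden, Finset.sum_eq_zero_iff_of_nonneg (fun γ _ => Complex.normSq_nonneg _)]
  constructor
  · intro h
    funext γ
    have := h γ (Finset.mem_univ γ)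
    rw [Complex.normSq_eq_zero, Smf_eq_zero_iff] at this
    exact this
  · intro h γ _
    rw [h]
    simp [Complex.normSq_eq_zero, Smf_eq_zero_iff]

theorem volume_singleton_addCircle (t : AddCircle (1:ℝ)) :
    (volume : Measure (AddCircle (1:ℝ))) {t} = 0 := by
  have h := AddCircle.volume_closedBall (T := 1) (x := t) 0
  rw [Metric.closedBall_zero] at h
  rw [h]
  norm_num

theorem ae_dden_ne_zero (hd : d ≠ 0) : ∀ᵐ x : Td d, dden x ≠ 0 := by
  have hset : {x : Td d | ¬ dden x ≠ 0} = {(0 : Td d)} := by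
    ext x
    simp only [Set.mem_setOf_eq, not_not, Set.mem_singleton_iff]
    exact dden_eq_zero_iff x
  rw [MeasureTheory.ae_iff, hset]
  have h1 : ({(0 : Td d)} : Set (Td d)) = Set.pi Set.univ fun _ => ({0} : Set (AddCircle (1:ℝ))) := by
    ext x
    simp only [Set.mem_singleton_iff, Set.mem_pi, Set.mem_univ, forall_true_left]
    constructor
    · intro h γ; rw [h]; rfl
    · intro h; funext γ; exact h γ
  rw [h1, volume_pi, Measure.pi_pi]
  simp [volume_singleton_addCircle, Finset.prod_const, hd]

theorem memLp_hFun (α β : Fin d) : MemLp (hFun α β) 2 (volume : Measure (Td d)) := by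
  refine MemLp.of_bound ((measurable_hFun α β).aestronglyMeasurable) 1 ?_
  exact Filter.Eventually.of_forall (norm_hFun_le α β)

theorem integrable_sq_norm_hFun (α β : Fin d) :
    Integrable (fun x : Td d => ‖hFun α β x‖ ^ 2) volume := by
  refine ⟨((measurable_hFun α β).norm.pow_const 2).aestronglyMeasurable, ?_⟩
  refine MeasureTheory.HasFiniteIntegral.of_bounded (C := 1) ?_
  refine Filter.Eventually.of_forall fun x => ?_
  rw [Real.norm_eq_abs, abs_of_nonneg (by positivity)]
  calc ‖hFun α β x‖ ^ 2 ≤ 1 ^ 2 := by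
        exact pow_le_pow_left₀ (norm_nonneg _) (norm_hFun_le α β x) 2
    _ = 1 := one_pow 2

theorem sum_integral_sq_norm_hFun (hd : d ≠ 0) :
    ∑ α : Fin d, ∑ β : Fin d, ∫ x : Td d, ‖hFun α β x‖ ^ 2 = 1 := by
  have h1 : ∀ α : Fin d, ∑ β : Fin d, ∫ x : Td d, ‖hFun α β x‖ ^ 2
      = ∫ x : Td d, ∑ β : Fin d, ‖hFun α β x‖ ^ 2 := fun α =>
    (MeasureTheory.integral_finset_sum _ fun β _ => integrable_sq_norm_hFun α β).symm
  simp_rw [h1]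
  rw [← MeasureTheory.integral_finset_sum _ (fun α _ =>
    integrable_finset_sum _ fun β _ => integrable_sq_norm_hFun α β)]
  have h2 : ∫ x : Td d, ∑ α : Fin d, ∑ β : Fin d, ‖hFun α β x‖ ^ 2
      = ∫ _x : Td d, (1:ℝ) := by
    refine integral_congr_ae ?_
    filter_upwards [ae_dden_ne_zero hd] with x hx
    exact sum_sq_norm_hFun hx
  rw [h2]
  simp


theorem pi_restrict (d : ℕ) (s : Fin d → Set ℝ) (hs : ∀ i, MeasurableSet (s i)) :
    Measure.pi (fun i : Fin d => (volume : Measure ℝ).restrict (s i))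
      = (volume : Measure (Fin d → ℝ)).restrict (Set.univ.pi s) := by
  refine Measure.pi_eq fun t ht => ?_
  rw [Measure.restrict_apply (MeasurableSet.univ_pi ht), ← Set.pi_inter_distrib, volume_pi,
    Measure.pi_pi]
  exact Finset.prod_congr rfl fun i _ => (Measure.restrict_apply (ht i)).symm

def PhiT (d : ℕ) : (Fin d → ℝ) → Td d := fun l γ => (l γ : AddCircle (1:ℝ))

theorem measurable_PhiT (d : ℕ) : Measurable (PhiT d) := by
  refine measurable_pi_lambda _ fun γ => ?_
  exact ((AddCircle.continuous_mk' (1:ℝ)).measurable).comp (measurable_pi_apply γ)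

theorem measurePreserving_PhiT (d : ℕ) :
    MeasurePreserving (PhiT d)
      ((volume : Measure (Fin d → ℝ)).restrict (Set.univ.pi fun _ => Set.Ioc (0:ℝ) 1))
      (volume : Measure (Td d)) := by
  have h0 : MeasurePreserving ((↑) : ℝ → AddCircle (1:ℝ))
      (volume.restrict (Set.Ioc (0:ℝ) 1)) volume := by
    have h := AddCircle.measurePreserving_mk (T := 1) 0
    simpa [mul_comm] using h
  have h2 := measurePreserving_pi (fun _ : Fin d => (volume : Measure ℝ).restrict (Set.Ioc 0 1))
      (fun _ : Fin d => (volume : Measure (AddCircle (1:ℝ)))) (fun _ => h0)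
  rw [pi_restrict d _ (fun _ => measurableSet_Ioc), ← volume_pi] at h2
  exact h2

theorem hyperplane_null (d : ℕ) (γ : Fin d) :
    (volume : Measure (Fin d → ℝ)) {l : Fin d → ℝ | l γ = 0} = 0 := by
  have h1 : {l : Fin d → ℝ | l γ = 0}
      = Set.univ.pi (Function.update (fun _ : Fin d => (Set.univ : Set ℝ)) γ {0}) := by
    ext l
    simp only [Set.mem_setOf_eq, Set.mem_pi, Set.mem_univ, forall_true_left]
    constructor
    · intro h δ
      rcases eq_or_ne δ γ with rfl | hδ
      · simp [Function.update, h]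
      · simp [Function.update_of_ne hδ]
    · intro h
      have := h γ
      simpa [Function.update] using this
  rw [h1, volume_pi, Measure.pi_pi]
  refine Finset.prod_eq_zero (Finset.mem_univ γ) ?_
  simp [Function.update]

theorem pi_Icc_ae_eq (d : ℕ) :
    (Set.univ.pi fun _ : Fin d => Set.Icc (0:ℝ) 1)
      =ᵐ[(volume : Measure (Fin d → ℝ))] (Set.univ.pi fun _ => Set.Ioc (0:ℝ) 1) := by
  rw [Filter.eventuallyEq_set]
  have key : ∀ᵐ l : Fin d → ℝ, ∀ γ : Fin d, l γ ≠ 0 := by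
    rw [MeasureTheory.ae_all_iff]
    intro γ
    rw [MeasureTheory.ae_iff]
    simpa using hyperplane_null d γ
  filter_upwards [key] with l hl
  simp only [Set.mem_pi, Set.mem_univ, forall_true_left, Set.mem_Icc, Set.mem_Ioc]
  constructor
  · intro h γ
    exact ⟨lt_of_le_of_ne (h γ).1 (Ne.symm (hl γ)), (h γ).2⟩
  · intro h γ
    exact ⟨le_of_lt (h γ).1, (h γ).2⟩

theorem setIntegral_Icc_eq_torus {d : ℕ} (F : Td d → ℂ)
    (hF : AEStronglyMeasurable F (volume : Measure (Td d))) :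
    ∫ l in Set.univ.pi fun _ : Fin d => Set.Icc (0:ℝ) 1, F (PhiT d l) = ∫ x : Td d, F x := by
  rw [setIntegral_congr_set (pi_Icc_ae_eq d)]
  have h := measurePreserving_PhiT d
  calc ∫ l in Set.univ.pi fun _ : Fin d => Set.Ioc (0:ℝ) 1, F (PhiT d l)
      = ∫ x : Td d, F x ∂(Measure.map (PhiT d)
          ((volume : Measure (Fin d → ℝ)).restrict (Set.univ.pi fun _ => Set.Ioc (0:ℝ) 1))) :=
        (integral_map h.measurable.aemeasurable (by rw [h.map_eq]; exact hF)).symm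
    _ = ∫ x : Td d, F x := by rw [h.map_eq]

theorem fourier_apply_neg (n : ℤ) (t : AddCircle (1:ℝ)) :
    fourier n (-t) = conj (fourier n t) := by
  rw [fourier_apply, show (n • -t) = -(n • t) by rw [smul_neg], fourier_neg']

theorem conj_mfourier_neg_arg {d : ℕ} (z : Fin d → ℤ) (x : Td d) :
    conj (mfourier z (-x)) = mfourier z x := by
  rw [mfourier_apply, map_prod]
  rw [mfourier_apply]
  refine Finset.prod_congr rfl fun γ _ => ?_
  rw [Pi.neg_apply, fourier_apply_neg, Complex.conj_conj]

theorem hFun_neg_arg {d : ℕ} (α β : Fin d) (x : Td d) :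
    hFun α β (-x) = conj (hFun α β x) := by
  have hdden : dden (-x) = dden x := by
    rw [dden, dden]
    refine Finset.sum_congr rfl fun γ _ => ?_
    rw [Pi.neg_apply, Smf_neg, Complex.normSq_neg, normSq_Spf]
  rw [hFun, hFun, hdden, Pi.neg_apply, Pi.neg_apply, Smf_neg, Spf_neg]
  rw [map_div₀, map_mul]
  rw [Complex.conj_ofReal]
  have hc : conj (Spf (x β)) = Smf (x β) := by rw [Spf_eq_conj, Complex.conj_conj]
  rw [Spf_eq_conj (x α), hc]
  ring

theorem measurePreserving_neg_Td (d : ℕ) :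
    MeasurePreserving (fun x : Td d => -x) volume volume := by
  have h0 : MeasurePreserving (fun t : AddCircle (1:ℝ) => -t) volume volume :=
    Measure.measurePreserving_neg _
  have h2 := measurePreserving_pi (fun _ : Fin d => (volume : Measure (AddCircle (1:ℝ))))
      (fun _ : Fin d => (volume : Measure (AddCircle (1:ℝ)))) (fun _ => h0)
  rw [← volume_pi] at h2
  exact h2

theorem norm_mfourier {d : ℕ} (z : Fin d → ℤ) (x : Td d) : ‖mfourier z x‖ = 1 := by
  rw [mfourier_apply]
  rw [norm_prod]
  refine Finset.prod_eq_one fun γ _ => ?_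
  exact Circle.norm_coe _

theorem measurable_integrand {d : ℕ} (α β : Fin d) (z : Fin d → ℤ) :
    Measurable (fun x : Td d => conj (mfourier z x) * hFun α β x) :=
  ((Complex.continuous_conj.comp (mfourier z).continuous).measurable).mul (measurable_hFun α β)

theorem norm_integrand_le {d : ℕ} (α β : Fin d) (z : Fin d → ℤ) (x : Td d) :
    ‖conj (mfourier z x) * hFun α β x‖ ≤ 1 := by
  rw [norm_mul, RCLike.norm_conj, norm_mfourier, one_mul]
  exact norm_hFun_le α β x

theorem mcoeff_hFun_real {d : ℕ} (α β : Fin d) (z : Fin d → ℤ) :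
    mcoeff (hFun α β) z = ((mcoeff (hFun α β) z).re : ℂ) := by
  have hmeas := measurable_integrand α β z
  have hneg := measurePreserving_neg_Td d
  have step1 : mcoeff (hFun α β) z
      = ∫ x : Td d, conj (mfourier z (-x)) * hFun α β (-x) := by
    rw [mcoeff]
    calc ∫ x : Td d, conj (mfourier z x) * hFun α β x
        = ∫ x : Td d, conj (mfourier z x) * hFun α β x
            ∂(Measure.map (fun x : Td d => -x) volume) := by rw [hneg.map_eq]
      _ = ∫ x : Td d, conj (mfourier z (-x)) * hFun α β (-x) := by
          rw [integral_map hneg.measurable.aemeasurable]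
          rw [hneg.map_eq]
          exact hmeas.aestronglyMeasurable
  have step2 : (∫ x : Td d, conj (mfourier z (-x)) * hFun α β (-x))
      = conj (mcoeff (hFun α β) z) := by
    rw [mcoeff, ← integral_conj]
    refine integral_congr_ae (Filter.Eventually.of_forall fun x => ?_)
    dsimp only
    rw [conj_mfourier_neg_arg, hFun_neg_arg, map_mul, Complex.conj_conj]
  have h5 : mcoeff (hFun α β) z = conj (mcoeff (hFun α β) z) := step1.trans step2
  exact (Complex.conj_eq_iff_re.mp h5.symm).symm

theorem mfourier_coe {d : ℕ} (z : Fin d → ℤ) (l : Fin d → ℝ) :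
    mfourier z (PhiT d l)
      = Complex.exp ((2 * π * (∑ γ, l γ * (z γ : ℝ)) : ℝ) * Complex.I) := by
  rw [mfourier_apply]
  have h : ∀ γ : Fin d, fourier (z γ) (PhiT d l γ)
      = Complex.exp (2 * (π:ℂ) * Complex.I * (z γ : ℂ) * (l γ : ℂ) / ((1:ℝ):ℂ)) := by
    intro γ
    exact fourier_coe_apply
  simp_rw [h]
  rw [← Complex.exp_sum]
  congr 1
  push_cast
  rw [Finset.mul_sum, Finset.sum_mul]
  exact Finset.sum_congr rfl fun γ _ => by ring

theorem dden_coe {d : ℕ} (l : Fin d → ℝ) :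
    dden (PhiT d l) = ∑ γ, Real.sin (π * l γ) ^ 2 := by
  rw [dden]
  exact Finset.sum_congr rfl fun γ _ => normSq_Smf_coe (l γ)

theorem integrand_re {d : ℕ} (α β : Fin d) (z : Fin d → ℤ) (l : Fin d → ℝ) :
    (conj (mfourier (-z) (PhiT d l)) * hFun α β (PhiT d l)).re
      = (Real.sin (π * l α) * Real.sin (π * l β) *
          Real.cos (2 * π * ((∑ γ, l γ * (z γ : ℝ)) - l α / 2 + l β / 2))) /
        ∑ γ, Real.sin (π * l γ) ^ 2 := by
  have h1 : conj (mfourier (-z) (PhiT d l)) = mfourier z (PhiT d l) := by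
    rw [show mfourier (-z) (PhiT d l) = conj (mfourier z (PhiT d l)) from mfourier_neg z _,
      Complex.conj_conj]
  rw [h1, mfourier_coe]
  have h2 : hFun α β (PhiT d l)
      = ((Real.sin (π * l α) : ℂ) * Complex.exp (-(π * l α : ℝ) * Complex.I))
        * ((Real.sin (π * l β) : ℂ) * Complex.exp ((π * l β : ℝ) * Complex.I))
        / ((∑ γ, Real.sin (π * l γ) ^ 2 : ℝ) : ℂ) := by
    rw [hFun, dden_coe]
    congr 1
    rw [show PhiT d l α = ((l α : ℝ) : AddCircle (1:ℝ)) from rfl,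
      show PhiT d l β = ((l β : ℝ) : AddCircle (1:ℝ)) from rfl, Smf_coe, Spf_coe]
  rw [h2]
  set A : ℝ := 2 * π * (∑ γ, l γ * (z γ : ℝ)) with hA
  set B : ℝ := π * l α with hB
  set C : ℝ := π * l β with hC
  set S : ℝ := ∑ γ, Real.sin (π * l γ) ^ 2 with hS
  have key : Complex.exp ((A:ℂ) * Complex.I)
      * ((Real.sin B : ℂ) * Complex.exp (-(B:ℂ) * Complex.I)
        * ((Real.sin C : ℂ) * Complex.exp ((C:ℂ) * Complex.I)) / (S : ℂ))
      = ((Real.sin B * Real.sin C / S : ℝ) : ℂ)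
          * Complex.exp (((A - B + C : ℝ) : ℂ) * Complex.I) := by
    rw [show ((A - B + C : ℝ) : ℂ) * Complex.I
        = (A:ℂ) * Complex.I + (-(B:ℂ) * Complex.I) + (C:ℂ) * Complex.I by push_cast; ring,
      Complex.exp_add, Complex.exp_add]
    push_cast
    ring
  rw [key, Complex.re_ofReal_mul, Complex.exp_ofReal_mul_I_re]
  have harg : A - B + C = 2 * π * ((∑ γ, l γ * (z γ : ℝ)) - l α / 2 + l β / 2) := by
    rw [hA, hB, hC]; ring
  rw [harg]
  ring

instance isFiniteMeasure_restrict_Icc (d : ℕ) :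
    IsFiniteMeasure ((volume : Measure (Fin d → ℝ)).restrict
      (Set.univ.pi fun _ : Fin d => Set.Icc (0:ℝ) 1)) := by
  constructor
  rw [Measure.restrict_apply_univ, volume_pi, Measure.pi_pi]
  simp [Real.volume_Icc]

theorem latticeGamma_eq' {d : ℕ} (α β : Fin d) (z : Fin d → ℤ) :
    latticeGamma d α β z = -(mcoeff (hFun α β) (-z)).re := by
  rw [latticeGamma]
  congr 1
  have h1 : (∫ l : Fin d → ℝ in Set.univ.pi fun _ : Fin d => Set.Icc (0 : ℝ) 1,
      (Real.sin (π * l α) * Real.sin (π * l β) *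
        Real.cos (2 * π * ((∑ γ, l γ * (z γ : ℝ)) - l α / 2 + l β / 2))) /
      ∑ γ, Real.sin (π * l γ) ^ 2)
      = ∫ l : Fin d → ℝ in Set.univ.pi fun _ : Fin d => Set.Icc (0 : ℝ) 1,
        (conj (mfourier (-z) (PhiT d l)) * hFun α β (PhiT d l)).re :=
    integral_congr_ae (Filter.Eventually.of_forall fun l => (integrand_re α β z l).symm)
  rw [h1]
  have hInt : Integrable (fun l : Fin d → ℝ => conj (mfourier (-z) (PhiT d l))
      * hFun α β (PhiT d l))
      ((volume : Measure (Fin d → ℝ)).restrict (Set.univ.pi fun _ => Set.Icc (0:ℝ) 1)) := by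
    refine ⟨((measurable_integrand α β (-z)).comp (measurable_PhiT d)).aestronglyMeasurable, ?_⟩
    refine MeasureTheory.HasFiniteIntegral.of_bounded (C := 1) ?_
    exact Filter.Eventually.of_forall fun l => norm_integrand_le α β (-z) (PhiT d l)
  have h2 := integral_re hInt
  simp only [RCLike.re_to_complex] at h2
  rw [h2]
  congr 1
  exact setIntegral_Icc_eq_torus (fun x => conj (mfourier (-z) x) * hFun α β x)
    (measurable_integrand α β (-z)).aestronglyMeasurable

theorem tsum_sq_latticeGamma {d : ℕ} (α β : Fin d) :
    ∑' z : Fin d → ℤ, latticeGamma d α β z ^ 2 = ∫ x : Td d, ‖hFun α β x‖ ^ 2 := by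
  have h1 : ∀ z : Fin d → ℤ, latticeGamma d α β z ^ 2 = ‖mcoeff (hFun α β) (-z)‖ ^ 2 := by
    intro z
    rw [latticeGamma_eq', neg_sq]
    conv_rhs => rw [mcoeff_hFun_real α β (-z)]
    rw [Complex.norm_real, Real.norm_eq_abs, sq_abs]
  rw [tsum_congr h1]
  have h2 := (Equiv.neg (Fin d → ℤ)).tsum_eq (fun w => ‖mcoeff (hFun α β) w‖ ^ 2)
  simp only [Equiv.neg_apply] at h2
  rw [h2]
  set f : Lp ℂ 2 (volume : Measure (Td d)) := (memLp_hFun α β).toLp (hFun α β) with hf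
  have hae : ⇑f =ᵐ[volume] hFun α β := MemLp.coeFn_toLp _
  have hc : ∀ w : Fin d → ℤ, mcoeff (⇑f) w = mcoeff (hFun α β) w := by
    intro w
    refine integral_congr_ae ?_
    filter_upwards [hae] with x hx
    rw [hx]
  have h4 : ∫ x : Td d, ‖f x‖ ^ 2 = ∫ x : Td d, ‖hFun α β x‖ ^ 2 := by
    refine integral_congr_ae ?_
    filter_upwards [hae] with x hx
    rw [hx]
  rw [← h4, ← tsum_sq_mcoeff f]
  exact tsum_congr fun w => by rw [hc w]


end

end LatticeGammaAux

open AddCircle in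
/-- The double sum over all direction pairs of the squared kernel equals 1. -/
theorem latticeGamma_sq_total_sum (d : ℕ) (hd : 2 ≤ d) :
    ∑ α : Fin d, ∑ β : Fin d, ∑' z : Fin d → ℤ, latticeGamma d β α z ^ 2 = 1 := by
  have hd0 : d ≠ 0 := by omega
  calc ∑ α : Fin d, ∑ β : Fin d, ∑' z : Fin d → ℤ, latticeGamma d β α z ^ 2
      = ∑ α : Fin d, ∑ β : Fin d, ∫ x : Td d, ‖hFun β α x‖ ^ 2 := by
        refine Finset.sum_congr rfl fun α _ => Finset.sum_congr rfl fun β _ => ?_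
        exact tsum_sq_latticeGamma β α
    _ = 1 := by rw [Finset.sum_comm]; exact sum_integral_sq_norm_hFun hd0
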